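/- Let τ > 0, c > 0 and a₁, a₂, a₃ ≥ 0 be real numbers. Then the function f(t) := (τ−t)·(a₁·t/(t+c) + a₂·√(t/(t+c)) + a₃) is concave on the interval [0, τ]. -/

import Mathlib

section Aux

variable {τ c : ℝ}

private lemma pos_add (hc : 0 < c) {t : ℝ} (ht : t ∈ Set.Icc (0:ℝ) τ) : 0 < t + c := by
  have := ht.1; linarith

/-- `t ↦ t/(t+c)` is concave on `[0, τ]`. -/
private lemma concave_u (hc : 0 < c) :
    ConcaveOn ℝ (Set.Icc (0:ℝ) τ) (fun t => t / (t + c)) := by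
  refine ⟨convex_Icc _ _, fun x hx y hy a b ha hb hab => ?_⟩
  have hx' : 0 < x + c := pos_add hc hx
  have hy' : 0 < y + c := pos_add hc hy
  have hz' : 0 < a * x + b * y + c := by nlinarith [hx.1, hy.1]
  simp only [smul_eq_mul]
  rw [mul_div_assoc', mul_div_assoc', div_add_div _ _ (ne_of_gt hx') (ne_of_gt hy'),
    div_le_div_iff₀ (by positivity) (by positivity)]
  have hb' : b = 1 - a := by linarith
  subst hb'
  nlinarith [mul_nonneg (mul_nonneg (mul_nonneg hc.le ha) hb) (sq_nonneg (x - y))]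

/-- `t ↦ t/(t+c)` is monotone on `[0, τ]`. -/
private lemma mono_u (hc : 0 < c) :
    MonotoneOn (fun t => t / (t + c)) (Set.Icc (0:ℝ) τ) := by
  intro x hx y hy hxy
  have hx' : 0 < x + c := pos_add hc hx
  have hy' : 0 < y + c := pos_add hc hy
  rw [div_le_div_iff₀ hx' hy']
  nlinarith

private lemma nonneg_u (hc : 0 < c) {t : ℝ} (ht : t ∈ Set.Icc (0:ℝ) τ) :
    0 ≤ t / (t + c) := div_nonneg ht.1 (pos_add hc ht).le

/-- `t ↦ √(t/(t+c))` is concave on `[0, τ]`. -/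
private lemma concave_su (hc : 0 < c) :
    ConcaveOn ℝ (Set.Icc (0:ℝ) τ) (fun t => Real.sqrt (t / (t + c))) := by
  have hs := Real.strictConcaveOn_sqrt.concaveOn
  refine ⟨convex_Icc _ _, fun x hx y hy a b ha hb hab => ?_⟩
  have h1 : a • Real.sqrt (x / (x + c)) + b • Real.sqrt (y / (y + c)) ≤
      Real.sqrt (a • (x / (x + c)) + b • (y / (y + c))) :=
    hs.2 (Set.mem_Ici.2 (nonneg_u hc hx)) (Set.mem_Ici.2 (nonneg_u hc hy)) ha hb hab
  refine h1.trans (Real.sqrt_le_sqrt ?_)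
  exact (concave_u hc).2 hx hy ha hb hab

end Aux

/-- The approximate average backscattered SNR
`f t = (τ - t) * (a₁ * t/(t+c) + a₂ * √(t/(t+c)) + a₃)`
is concave in the channel-estimation time allocation `t ∈ [0, τ]`. -/
theorem concaveOn_snr_approx
    (τ c a₁ a₂ a₃ : ℝ) (hτ : 0 < τ) (hc : 0 < c)
    (ha₁ : 0 ≤ a₁) (ha₂ : 0 ≤ a₂) (ha₃ : 0 ≤ a₃) :
    ConcaveOn ℝ (Set.Icc 0 τ)
      (fun t => (τ - t) * (a₁ * (t / (t + c)) + a₂ * Real.sqrt (t / (t + c)) + a₃)) := by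
  set s : Set ℝ := Set.Icc 0 τ with hs
  set g : ℝ → ℝ := fun t => a₁ * (t / (t + c)) + a₂ * Real.sqrt (t / (t + c)) + a₃ with hgdef
  set h : ℝ → ℝ := fun t => τ - t with hhdef
  -- h is concave (affine)
  have hh : ConcaveOn ℝ s h := by
    refine ⟨convex_Icc _ _, fun x hx y hy a b ha hb hab => ?_⟩
    simp only [hhdef, smul_eq_mul]
    nlinarith
  -- g is concave
  have hg : ConcaveOn ℝ s g := by
    have h1 : ConcaveOn ℝ s (fun t => a₁ * (t / (t + c))) := by
      simpa [smul_eq_mul] using (concave_u (τ := τ) hc).smul ha₁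
    have h2 : ConcaveOn ℝ s (fun t => a₂ * Real.sqrt (t / (t + c))) := by
      simpa [smul_eq_mul] using (concave_su (τ := τ) hc).smul ha₂
    exact (h1.add h2).add_const a₃
  -- g is monotone on s
  have hgm : MonotoneOn g s := by
    intro x hx y hy hxy
    have h1 := mono_u (τ := τ) hc hx hy hxy
    have h2 : Real.sqrt (x / (x + c)) ≤ Real.sqrt (y / (y + c)) := Real.sqrt_le_sqrt h1
    simp only [hgdef]
    have := mul_le_mul_of_nonneg_left h1 ha₁
    have := mul_le_mul_of_nonneg_left h2 ha₂
    linarith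
  -- nonnegativity
  have hh0 : ∀ ⦃x⦄, x ∈ s → 0 ≤ h x := fun x hx => by
    simp only [hhdef]; linarith [hx.2]
  have hg0 : ∀ ⦃x⦄, x ∈ s → 0 ≤ g x := fun x hx => by
    have := nonneg_u (τ := τ) hc hx
    have hsq : 0 ≤ Real.sqrt (x / (x + c)) := Real.sqrt_nonneg _
    simp only [hgdef]
    positivity
  -- antivary
  have hav : AntivaryOn h g s := by
    intro i hi j hj hlt
    rcases le_total i j with hij | hij
    · simp only [hhdef]; linarith
    · exact absurd (hgm hj hi hij) (not_le.2 hlt)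
  exact hh.mul hg hh0 hg0 hav
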